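/- MGF bound for U-statistics (Hoeffding decoupling bound): Let X(1),...,X(n) be i.i.d. random variables with values in a measurable space X, let h : X^m → ℝ be a symmetric measurable centered kernel, and let U_n be the associated U-statistic. With η = h(X(1),...,X(m)) and k = ⌊n/m⌋, for every λ ∈ ℝ, E exp(λ U_n) ≤ (E exp(λη/k))^k. -/

import Mathlib

open MeasureTheory ProbabilityTheory Real Set Filter

section Comb

variable {X : Type*} {n m : ℕ}

/-- The permutation of `Fin n` built from an `m`-subset `s`, a permutation of `Fin m`
(acting inside `s`) and a permutation of `Fin (n-m)` (acting inside `sᶜ`), relative to a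
fixed strictly monotone embedding `e` with image `E`. -/
noncomputable def permOfPieces (E : Finset (Fin n)) (hE : E.card = m)
    (hEc : Eᶜ.card = n - m)
    (s : Finset (Fin n)) (hs : s.card = m) (hsc : sᶜ.card = n - m)
    (a : Equiv.Perm (Fin m)) (b : Equiv.Perm (Fin (n - m))) : Equiv.Perm (Fin n) :=
  ((Equiv.sumCompl (· ∈ E)).symm.trans
    (Equiv.sumCongr
      ((E.orderIsoOfFin hE).toEquiv.symm.trans (a.trans (s.orderIsoOfFin hs).toEquiv))
      (((Equiv.subtypeEquivRight (fun t => (Finset.mem_compl (s := E)).symm)).trans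
          ((Eᶜ.orderIsoOfFin hEc).toEquiv.symm.trans
            (b.trans (sᶜ.orderIsoOfFin hsc).toEquiv))).trans
        (Equiv.subtypeEquivRight (fun t => (Finset.mem_compl (s := s)))))
  )).trans (Equiv.sumCompl (· ∈ s))

lemma permOfPieces_apply_mem (E : Finset (Fin n)) (hE : E.card = m)
    (hEc : Eᶜ.card = n - m)
    (s : Finset (Fin n)) (hs : s.card = m) (hsc : sᶜ.card = n - m)
    (a : Equiv.Perm (Fin m)) (b : Equiv.Perm (Fin (n - m))) (t : Fin n) (ht : t ∈ E) :
    permOfPieces E hE hEc s hs hsc a b t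
      = (s.orderIsoOfFin hs (a ((E.orderIsoOfFin hE).symm ⟨t, ht⟩)) : Fin n) := by
  simp [permOfPieces, Equiv.sumCompl_symm_apply_of_pos ht]

lemma permOfPieces_apply_not_mem (E : Finset (Fin n)) (hE : E.card = m)
    (hEc : Eᶜ.card = n - m)
    (s : Finset (Fin n)) (hs : s.card = m) (hsc : sᶜ.card = n - m)
    (a : Equiv.Perm (Fin m)) (b : Equiv.Perm (Fin (n - m))) (t : Fin n) (ht : t ∉ E) :
    permOfPieces E hE hEc s hs hsc a b t
      = (sᶜ.orderIsoOfFin hsc (b ((Eᶜ.orderIsoOfFin hEc).symm ⟨t, Finset.mem_compl.2 ht⟩))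
          : Fin n) := by
  simp [permOfPieces, Equiv.sumCompl_symm_apply_of_neg ht, Equiv.subtypeEquivRight,
    Equiv.subtypeEquiv_apply]
  rfl

end Comb

section Comb2

variable {X : Type*} {n m : ℕ}

lemma permOfPieces_image (E : Finset (Fin n)) (hE : E.card = m) (hEc : Eᶜ.card = n - m)
    (s : Finset (Fin n)) (hs : s.card = m) (hsc : sᶜ.card = n - m)
    (a : Equiv.Perm (Fin m)) (b : Equiv.Perm (Fin (n - m))) :
    Finset.image (fun u : {x // x ∈ E} =>
      permOfPieces E hE hEc s hs hsc a b u.1) E.attach = s := by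
  ext t
  simp only [Finset.mem_image, Finset.mem_attach, true_and]
  constructor
  · rintro ⟨u, rfl⟩
    rw [permOfPieces_apply_mem E hE hEc s hs hsc a b u.1 u.2]
    exact (s.orderIsoOfFin hs _).2
  · intro ht
    refine ⟨⟨(E.orderIsoOfFin hE (a.symm ((s.orderIsoOfFin hs).symm ⟨t, ht⟩)) : Fin n),
      (E.orderIsoOfFin hE _).2⟩, ?_⟩
    rw [permOfPieces_apply_mem E hE hEc s hs hsc a b _ _]
    rw [Subtype.coe_eta, OrderIso.symm_apply_apply, Equiv.apply_symm_apply,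
      OrderIso.apply_symm_apply]
    exact (E.orderIsoOfFin hE _).2

lemma permOfPieces_injective (E : Finset (Fin n)) (hE : E.card = m) (hEc : Eᶜ.card = n - m)
    {s s' : Finset (Fin n)} (hs : s.card = m) (hsc : sᶜ.card = n - m)
    (hs' : s'.card = m) (hsc' : s'ᶜ.card = n - m)
    {a a' : Equiv.Perm (Fin m)} {b b' : Equiv.Perm (Fin (n - m))}
    (heq : permOfPieces E hE hEc s hs hsc a b = permOfPieces E hE hEc s' hs' hsc' a' b') :
    s = s' ∧ a = a' ∧ b = b' := by
  have hss : s = s' := by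
    rw [← permOfPieces_image E hE hEc s hs hsc a b,
      ← permOfPieces_image E hE hEc s' hs' hsc' a' b', heq]
  subst hss
  refine ⟨rfl, ?_, ?_⟩
  · ext i
    have h1 := permOfPieces_apply_mem E hE hEc s hs hsc a b
      (E.orderIsoOfFin hE i : Fin n) (E.orderIsoOfFin hE i).2
    have h2 := permOfPieces_apply_mem E hE hEc s hs' hsc' a' b'
      (E.orderIsoOfFin hE i : Fin n) (E.orderIsoOfFin hE i).2
    have hsub : (⟨(E.orderIsoOfFin hE i : Fin n), (E.orderIsoOfFin hE i).2⟩ : {x // x ∈ E})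
        = E.orderIsoOfFin hE i := rfl
    rw [heq] at h1
    rw [h2, hsub, OrderIso.symm_apply_apply] at h1
    have := Subtype.coe_injective h1
    exact ((s.orderIsoOfFin hs).injective this).symm ▸ rfl
  · ext i
    have hmem := (Eᶜ.orderIsoOfFin hEc i).2
    have hnot : (Eᶜ.orderIsoOfFin hEc i : Fin n) ∉ E := Finset.mem_compl.1 hmem
    have h1 := permOfPieces_apply_not_mem E hE hEc s hs hsc a b
      (Eᶜ.orderIsoOfFin hEc i : Fin n) hnot
    have h2 := permOfPieces_apply_not_mem E hE hEc s hs' hsc' a' b'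
      (Eᶜ.orderIsoOfFin hEc i : Fin n) hnot
    have hsub : (⟨(Eᶜ.orderIsoOfFin hEc i : Fin n), Finset.mem_compl.2 hnot⟩ : {x // x ∈ Eᶜ})
        = Eᶜ.orderIsoOfFin hEc i := rfl
    rw [heq] at h1
    rw [h2, hsub, OrderIso.symm_apply_apply] at h1
    have := Subtype.coe_injective h1
    exact ((sᶜ.orderIsoOfFin hsc).injective this).symm ▸ rfl

end Comb2

section Comb3

variable {X : Type*} {n m : ℕ}

lemma sum_perm_eq (hmn : m ≤ n) (h : (Fin m → X) → ℝ)
    (hsymm : ∀ (σ : Equiv.Perm (Fin m)) (x : Fin m → X), h (x ∘ σ) = h x)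
    (e : Fin m → Fin n) (he : StrictMono e) (x : Fin n → X) :
    ∑ σ : Equiv.Perm (Fin n), h (fun i => x (σ (e i)))
      = (m.factorial * (n - m).factorial : ℝ) *
        ∑ s ∈ (Finset.powersetCard m (Finset.univ : Finset (Fin n))).attach,
          h (fun j => x (s.1.orderIsoOfFin ((Finset.mem_powersetCard.mp s.2).2) j)) := by
  classical
  set E : Finset (Fin n) := Finset.map ⟨e, he.injective⟩ Finset.univ with hEdef
  have hE : E.card = m := by simp [hEdef]
  have hEc : Eᶜ.card = n - m := by simp [Finset.card_compl, hE]
  have hmemE : ∀ i, e i ∈ E := fun i => by simp [hEdef]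
  have heeq : ∀ i, (E.orderIsoOfFin hE i : Fin n) = e i := by
    intro i
    rw [Finset.coe_orderIsoOfFin_apply,
      ← Finset.orderEmbOfFin_unique hE hmemE he]
  set T := Finset.powersetCard m (Finset.univ : Finset (Fin n)) with hTdef
  have hcard : ∀ s : {x // x ∈ T}, s.1.card = m := fun s =>
    (Finset.mem_powersetCard.mp s.2).2
  have hcardc : ∀ s : {x // x ∈ T}, s.1ᶜ.card = n - m := fun s => by
    simp [Finset.card_compl, hcard s]
  set Φ : {x // x ∈ T} × Equiv.Perm (Fin m) × Equiv.Perm (Fin (n - m)) → Equiv.Perm (Fin n) :=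
    fun p => permOfPieces E hE hEc p.1.1 (hcard p.1) (hcardc p.1) p.2.1 p.2.2 with hΦdef
  have hinj : Function.Injective Φ := by
    rintro ⟨s, a, b⟩ ⟨s', a', b'⟩ hp
    obtain ⟨h1, h2, h3⟩ := permOfPieces_injective E hE hEc
      (hcard s) (hcardc s) (hcard s') (hcardc s') hp
    exact Prod.ext (Subtype.ext h1) (Prod.ext h2 h3)
  have hbij : Function.Bijective Φ := by
    rw [Fintype.bijective_iff_injective_and_card]
    refine ⟨hinj, ?_⟩
    rw [Fintype.card_prod, Fintype.card_prod, Fintype.card_coe, Fintype.card_perm,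
      Fintype.card_perm, Fintype.card_fin, Fintype.card_fin, Fintype.card_perm,
      Fintype.card_fin, hTdef, Finset.card_powersetCard, Finset.card_univ, Fintype.card_fin,
      ← Nat.choose_mul_factorial_mul_factorial hmn, Nat.mul_assoc]
  have hval : ∀ p : {x // x ∈ T} × Equiv.Perm (Fin m) × Equiv.Perm (Fin (n - m)),
      h (fun i => x (Φ p (e i)))
        = h (fun j => x (p.1.1.orderIsoOfFin (hcard p.1) j)) := by
    rintro ⟨s, a, b⟩
    have : ∀ i, Φ (⟨s, a, b⟩) (e i)
        = (s.1.orderIsoOfFin (hcard s) (a i) : Fin n) := by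
      intro i
      rw [hΦdef]
      rw [permOfPieces_apply_mem E hE hEc s.1 (hcard s) (hcardc s) a b (e i) (hmemE i)]
      congr 2
      rw [show (⟨e i, hmemE i⟩ : {x // x ∈ E}) = E.orderIsoOfFin hE i from
        Subtype.ext (heeq i).symm, OrderIso.symm_apply_apply]
    simp only [this]
    exact hsymm a (fun j => x ((s.1.orderIsoOfFin (hcard s)) j : Fin n))
  calc ∑ σ : Equiv.Perm (Fin n), h (fun i => x (σ (e i)))
      = ∑ p : {x // x ∈ T} × Equiv.Perm (Fin m) × Equiv.Perm (Fin (n - m)),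
          h (fun i => x (Φ p (e i))) :=
        (Fintype.sum_bijective Φ hbij _ _ (fun p => rfl)).symm
    _ = ∑ p : {x // x ∈ T} × Equiv.Perm (Fin m) × Equiv.Perm (Fin (n - m)),
          h (fun j => x (p.1.1.orderIsoOfFin (hcard p.1) j)) := by
        exact Finset.sum_congr rfl (fun p _ => hval p)
    _ = ∑ s : {x // x ∈ T}, ∑ q : Equiv.Perm (Fin m) × Equiv.Perm (Fin (n - m)),
          h (fun j => x (s.1.orderIsoOfFin (hcard s) j)) := by
        rw [Fintype.sum_prod_type]
    _ = (m.factorial * (n - m).factorial : ℝ) *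
        ∑ s ∈ T.attach, h (fun j => x (s.1.orderIsoOfFin (hcard s) j)) := by
        rw [Finset.mul_sum]
        rw [show T.attach = (Finset.univ : Finset {x // x ∈ T}) from rfl]
        refine Finset.sum_congr rfl (fun s _ => ?_)
        rw [Finset.sum_const, Finset.card_univ, Fintype.card_prod, Fintype.card_perm,
          Fintype.card_perm, Fintype.card_fin, Fintype.card_fin]
        push_cast
        ring

end Comb3

section IdentBlocks

variable {Ω X : Type*} [MeasurableSpace Ω] [MeasurableSpace X]

lemma map_tuple_eq_pi (μ : Measure Ω) [IsProbabilityMeasure μ] {n m : ℕ}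
    (Xs : Fin n → Ω → X) (hmeas : ∀ i, Measurable (Xs i))
    (hindep : iIndepFun Xs μ)
    (hident : ∀ i j, IdentDistrib (Xs i) (Xs j) μ μ)
    (d : Fin n) (e : Fin m → Fin n) (he : Function.Injective e) :
    μ.map (fun ω i => Xs (e i) ω) = Measure.pi (fun _ : Fin m => μ.map (Xs d)) := by
  classical
  haveI : IsProbabilityMeasure (μ.map (Xs d)) :=
    Measure.isProbabilityMeasure_map (hmeas d).aemeasurable
  have hfmeas : Measurable (fun ω i => Xs (e i) ω) :=
    measurable_pi_iff.mpr fun i => hmeas (e i)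
  refine (Measure.pi_eq fun s hs => ?_).symm
  rw [Measure.map_apply hfmeas (MeasurableSet.univ_pi hs)]
  -- the preimage is the intersection over the image finset of `e`
  set sets : Fin n → Set X := fun t =>
    if ht : ∃ i, e i = t then s ht.choose else Set.univ with hsets
  have hsets_e : ∀ i, sets (e i) = s i := by
    intro i
    have hex : ∃ j, e j = e i := ⟨i, rfl⟩
    have : hex.choose = i := he hex.choose_spec
    simp [hsets, dif_pos hex, this]
  have hpre : (fun ω i => Xs (e i) ω) ⁻¹' (Set.pi Set.univ s)
      = ⋂ t ∈ Finset.image e Finset.univ, Xs t ⁻¹' sets t := by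
    ext ω
    simp only [Set.mem_preimage, Set.mem_univ_pi, Set.mem_iInter, Finset.mem_image,
      Finset.mem_univ, true_and]
    constructor
    · rintro hω t ⟨i, rfl⟩
      rw [hsets_e i]; exact hω i
    · intro hω i
      rw [← hsets_e i]; exact hω (e i) ⟨i, rfl⟩
  rw [hpre]
  have hmeas_sets : ∀ t ∈ Finset.image e Finset.univ, MeasurableSet (sets t) := by
    intro t _
    by_cases ht : ∃ i, e i = t
    · rw [hsets]; simp only [dif_pos ht]; exact hs _
    · rw [hsets]; simp only [dif_neg ht]; exact MeasurableSet.univ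
  rw [(iIndepFun_iff_measure_inter_preimage_eq_mul.mp hindep) (Finset.image e Finset.univ)
    hmeas_sets]
  rw [Finset.prod_image (fun i _ j _ hij => he hij)]
  refine Finset.prod_congr rfl fun i _ => ?_
  rw [hsets_e i, ← Measure.map_apply (hmeas (e i)) (hs i), (hident (e i) d).map_eq,
    Measure.map_apply (hmeas d) (hs i)]

lemma identDistrib_tuple (μ : Measure Ω) [IsProbabilityMeasure μ] {n m : ℕ}
    (Xs : Fin n → Ω → X) (hmeas : ∀ i, Measurable (Xs i))
    (hindep : iIndepFun Xs μ)
    (hident : ∀ i j, IdentDistrib (Xs i) (Xs j) μ μ)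
    (e e' : Fin m → Fin n) (he : Function.Injective e) (he' : Function.Injective e')
    (d : Fin n) :
    IdentDistrib (fun ω i => Xs (e i) ω) (fun ω i => Xs (e' i) ω) μ μ := by
  refine ⟨(measurable_pi_iff.mpr fun i => hmeas (e i)).aemeasurable,
    (measurable_pi_iff.mpr fun i => hmeas (e' i)).aemeasurable, ?_⟩
  rw [map_tuple_eq_pi μ Xs hmeas hindep hident d e he,
    map_tuple_eq_pi μ Xs hmeas hindep hident d e' he']

end IdentBlocks

section IndepBlocks

variable {Ω X : Type*} [MeasurableSpace Ω] [MeasurableSpace X]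

lemma integral_prod_blocks (μ : Measure Ω) [IsProbabilityMeasure μ] {n k m : ℕ}
    (Xs : Fin n → Ω → X) (hmeas : ∀ i, Measurable (Xs i))
    (hindep : iIndepFun Xs μ)
    (g : (Fin m → X) → ℝ) (hg : Measurable g)
    (E : Fin k → Fin m → Fin n)
    (hinj : ∀ j j' i i', E j i = E j' i' → j = j')
    (hint : ∀ j, Integrable (fun ω => g (fun i => Xs (E j i) ω)) μ) :
    Integrable (fun ω => ∏ j, g (fun i => Xs (E j i) ω)) μ ∧
    ∫ ω, ∏ j, g (fun i => Xs (E j i) ω) ∂μ = ∏ j, ∫ ω, g (fun i => Xs (E j i) ω) ∂μ := by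
  classical
  suffices H : ∀ T : Finset (Fin k),
      Integrable (fun ω => ∏ j ∈ T, g (fun i => Xs (E j i) ω)) μ ∧
      ∫ ω, ∏ j ∈ T, g (fun i => Xs (E j i) ω) ∂μ
        = ∏ j ∈ T, ∫ ω, g (fun i => Xs (E j i) ω) ∂μ by
    exact H Finset.univ
  intro T
  induction T using Finset.induction with
  | empty => simp
  | @insert j T hj ih =>
    -- independence of the `j` block from the `T` blocks
    set S : Finset (Fin n) := Finset.image (E j) Finset.univ with hSdef
    set S' : Finset (Fin n) := T.biUnion (fun j' => Finset.image (E j') Finset.univ) with hS'def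
    have hdisj : Disjoint S S' := by
      rw [Finset.disjoint_left]
      intro t htS htS'
      rw [hSdef, Finset.mem_image] at htS
      rw [hS'def, Finset.mem_biUnion] at htS'
      obtain ⟨i, _, rfl⟩ := htS
      obtain ⟨j', hj', ht'⟩ := htS'
      rw [Finset.mem_image] at ht'
      obtain ⟨i', _, hti⟩ := ht'
      exact hj ((hinj j' j i' i hti) ▸ hj')
    have hIF := hindep.indepFun_finset S' S hdisj.symm hmeas
    have hmemS : ∀ i, E j i ∈ S := fun i => Finset.mem_image_of_mem _ (Finset.mem_univ i)
    have hmemS' : ∀ j' : {x // x ∈ T}, ∀ i, E j'.1 i ∈ S' := fun j' i => by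
      rw [hS'def, Finset.mem_biUnion]
      exact ⟨j'.1, j'.2, Finset.mem_image_of_mem _ (Finset.mem_univ i)⟩
    set φ : ({x // x ∈ S} → X) → ℝ := fun p => g (fun i => p ⟨E j i, hmemS i⟩) with hφdef
    set ψ : ({x // x ∈ S'} → X) → ℝ := fun p =>
      ∏ j' ∈ T.attach, g (fun i => p ⟨E j'.1 i, hmemS' j' i⟩) with hψdef
    have hφm : Measurable φ :=
      hg.comp (measurable_pi_lambda _ fun i => measurable_pi_apply _)
    have hψm : Measurable ψ :=
      Finset.measurable_prod _ fun j' _ =>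
        hg.comp (measurable_pi_lambda _ fun i => measurable_pi_apply _)
    have hIndep2 : IndepFun (fun ω => ∏ j' ∈ T, g (fun i => Xs (E j' i) ω))
        (fun ω => g (fun i => Xs (E j i) ω)) μ := by
      have := hIF.comp hψm hφm
      have heq1 : (ψ ∘ fun ω (t : {x // x ∈ S'}) => Xs t.1 ω)
          = fun ω => ∏ j' ∈ T, g (fun i => Xs (E j' i) ω) := by
        funext ω
        rw [Function.comp_apply, hψdef]
        exact Finset.prod_attach T (fun j' => g (fun i => Xs (E j' i) ω))
      have heq2 : (φ ∘ fun ω (t : {x // x ∈ S}) => Xs t.1 ω)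
          = fun ω => g (fun i => Xs (E j i) ω) := rfl
      rwa [heq1, heq2] at this
    have hmul : (fun ω => ∏ j' ∈ insert j T, g (fun i => Xs (E j' i) ω))
        = (fun ω => ∏ j' ∈ T, g (fun i => Xs (E j' i) ω))
          * (fun ω => g (fun i => Xs (E j i) ω)) := by
      funext ω
      rw [Finset.prod_insert hj, Pi.mul_apply]
      ring
    constructor
    · rw [hmul]
      exact hIndep2.integrable_mul ih.1 (hint j)
    · rw [Finset.prod_insert hj, show (∫ ω, ∏ j' ∈ insert j T, g (fun i => Xs (E j' i) ω) ∂μ)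
        = integral μ ((fun ω => ∏ j' ∈ T, g (fun i => Xs (E j' i) ω))
          * (fun ω => g (fun i => Xs (E j i) ω))) from by rw [← hmul],
        hIndep2.integral_mul_eq_mul_integral ih.1.aestronglyMeasurable
          (hint j).aestronglyMeasurable, ih.2]
      ring

end IndepBlocks

section Blocks

/-- The `i`-th element of the `j`-th block of size `m` in `Fin n`. -/
def blk (n m : ℕ) (j : Fin (n / m)) (i : Fin m) : Fin n :=
  ⟨j.1 * m + i.1, by
    have h1 : j.1 * m + i.1 < (j.1 + 1) * m := by
      rw [Nat.succ_mul]; exact Nat.add_lt_add_left i.2 _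
    have h2 : (j.1 + 1) * m ≤ (n / m) * m := Nat.mul_le_mul_right m j.2
    exact lt_of_lt_of_le h1 (le_trans h2 (Nat.div_mul_le_self n m))⟩

lemma blk_strictMono {n m : ℕ} (j : Fin (n / m)) : StrictMono (blk n m j) := by
  intro i i' hii
  exact Fin.mk_lt_mk.mpr (Nat.add_lt_add_left hii _)

lemma blk_val_div {n m : ℕ} (hm : 0 < m) (j : Fin (n / m)) (i : Fin m) :
    ((blk n m j i : ℕ)) / m = j.1 := by
  show (j.1 * m + i.1) / m = j.1
  rw [Nat.mul_comm, Nat.mul_add_div hm, Nat.div_eq_of_lt i.2, Nat.add_zero]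

lemma blk_eq_imp {n m : ℕ} (hm : 0 < m) {j j' : Fin (n / m)} {i i' : Fin m}
    (hE : blk n m j i = blk n m j' i') : j = j' := by
  have := congrArg (fun t : Fin n => (t : ℕ) / m) hE
  simp only [blk_val_div hm] at this
  exact Fin.ext this

end Blocks

/-- The U-statistic with kernel `h` of `m` variables built from `X(1),…,X(n)`:
`U_n = C(n,m)⁻¹ ∑_{1 ≤ i(1) < … < i(m) ≤ n} h(X(i(1)),…,X(i(m)))`. -/
noncomputable def Ustat {Ω X : Type*} {n : ℕ} (m : ℕ) (h : (Fin m → X) → ℝ)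
    (Xs : Fin n → Ω → X) (ω : Ω) : ℝ :=
  ((n.choose m : ℝ))⁻¹ *
    ∑ s ∈ (Finset.powersetCard m (Finset.univ : Finset (Fin n))).attach,
      h (fun j => Xs ((s.1.orderIsoOfFin ((Finset.mem_powersetCard.mp s.2).2) j : Fin n)) ω)

/-- Hoeffding decoupling bound for the moment generating function of a U-statistic:
for i.i.d. `X(i)`, a symmetric centered kernel `h`, `η = h(X(1),…,X(m))` and
`k = ⌊n/m⌋`, one has `E exp(λ U_n) ≤ (E exp(λ η / k))^k` for every `λ`. -/
theorem mgf_Ustat_le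
    {Ω X : Type*} [MeasurableSpace Ω] [MeasurableSpace X]
    (μ : Measure Ω) [IsProbabilityMeasure μ]
    (n m : ℕ) (hm : 0 < m) (hmn : m ≤ n)
    (Xs : Fin n → Ω → X) (hmeas : ∀ i, Measurable (Xs i))
    (hindep : iIndepFun Xs μ)
    (hident : ∀ i j, IdentDistrib (Xs i) (Xs j) μ μ)
    (h : (Fin m → X) → ℝ) (hhmeas : Measurable h)
    (hsymm : ∀ (σ : Equiv.Perm (Fin m)) (x : Fin m → X), h (x ∘ σ) = h x)
    (hcent : (∫ ω, h (fun i => Xs (Fin.castLE hmn i) ω) ∂μ) = 0)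
    (l : ℝ)
    (hexpint : Integrable
      (fun ω => Real.exp (l * h (fun i => Xs (Fin.castLE hmn i) ω) / (n / m : ℕ))) μ) :
    (∫ ω, Real.exp (l * Ustat m h Xs ω) ∂μ)
      ≤ (∫ ω, Real.exp (l * h (fun i => Xs (Fin.castLE hmn i) ω) / (n / m : ℕ)) ∂μ)
          ^ (n / m : ℕ) := by
  classical
  set k := n / m with hkdef
  have hk : 0 < k := (Nat.one_le_div_iff hm).mpr hmn
  have hkR : (0:ℝ) < (k:ℝ) := by exact_mod_cast hk
  -- the function applied to each block
  set g : (Fin m → X) → ℝ := fun y => Real.exp (l * h y / k) with hgdef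
  have hgmeas : Measurable g := (((hhmeas.const_mul l).div_const _).exp)
  set R := ∫ ω, g (fun i => Xs (Fin.castLE hmn i) ω) ∂μ with hRdef
  -- identical distribution of all blocks
  have hGident : ∀ (σ : Equiv.Perm (Fin n)) (j : Fin k),
      IdentDistrib (fun ω => g (fun i => Xs (σ (blk n m j i)) ω))
        (fun ω => g (fun i => Xs (Fin.castLE hmn i) ω)) μ μ := by
    intro σ j
    have hinj1 : Function.Injective (fun i => σ (blk n m j i)) :=
      σ.injective.comp (blk_strictMono j).injective
    have := identDistrib_tuple μ Xs hmeas hindep hident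
      (fun i => σ (blk n m j i)) (Fin.castLE hmn) hinj1 (Fin.castLE_injective hmn)
      ⟨0, lt_of_lt_of_le hm hmn⟩
    exact this.comp hgmeas
  have hGint : ∀ (σ : Equiv.Perm (Fin n)) (j : Fin k),
      Integrable (fun ω => g (fun i => Xs (σ (blk n m j i)) ω)) μ :=
    fun σ j => (hGident σ j).integrable_iff.mpr hexpint
  have hGeq : ∀ (σ : Equiv.Perm (Fin n)) (j : Fin k),
      ∫ ω, g (fun i => Xs (σ (blk n m j i)) ω) ∂μ = R :=
    fun σ j => (hGident σ j).integral_eq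
  -- product over blocks
  have hprod : ∀ σ : Equiv.Perm (Fin n),
      Integrable (fun ω => ∏ j : Fin k, g (fun i => Xs (σ (blk n m j i)) ω)) μ ∧
      ∫ ω, ∏ j : Fin k, g (fun i => Xs (σ (blk n m j i)) ω) ∂μ = R ^ k := by
    intro σ
    have hinjE : ∀ (j j' : Fin k) (i i' : Fin m),
        σ (blk n m j i) = σ (blk n m j' i') → j = j' :=
      fun j j' i i' hE => blk_eq_imp hm (σ.injective hE)
    obtain ⟨h1, h2⟩ := integral_prod_blocks μ Xs hmeas hindep g hgmeas
      (fun j i => σ (blk n m j i)) hinjE (hGint σ)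
    refine ⟨h1, ?_⟩
    rw [h2]
    simp only [hGeq σ]
    rw [Finset.prod_const, Finset.card_univ, Fintype.card_fin]
  -- pointwise Jensen
  have hjensen : ∀ ω : Ω, Real.exp (l * Ustat m h Xs ω)
      ≤ ∑ σ : Equiv.Perm (Fin n), ((n.factorial : ℝ))⁻¹ *
          Real.exp (∑ j : Fin k, l * h (fun i => Xs (σ (blk n m j i)) ω) / k) := by
    intro ω
    have hfac : (0:ℝ) < (n.factorial : ℝ) := by exact_mod_cast n.factorial_pos
    have hchoose : (0:ℝ) < (n.choose m : ℝ) := by exact_mod_cast Nat.choose_pos hmn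
    have hw1 : ∑ _σ : Equiv.Perm (Fin n), ((n.factorial : ℝ))⁻¹ = 1 := by
      rw [Finset.sum_const, Finset.card_univ, Fintype.card_perm, Fintype.card_fin,
        nsmul_eq_mul]
      field_simp
    have hJ := convexOn_exp.map_sum_le (t := (Finset.univ : Finset (Equiv.Perm (Fin n))))
      (w := fun _ => ((n.factorial : ℝ))⁻¹)
      (p := fun σ => ∑ j : Fin k, l * h (fun i => Xs (σ (blk n m j i)) ω) / k)
      (fun _ _ => by positivity) hw1 (fun _ _ => Set.mem_univ _)
    have hcenter : ∑ σ : Equiv.Perm (Fin n), ((n.factorial : ℝ))⁻¹ •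
        (∑ j : Fin k, l * h (fun i => Xs (σ (blk n m j i)) ω) / k)
        = l * Ustat m h Xs ω := by
      have hA : ∀ j : Fin k,
          ∑ σ : Equiv.Perm (Fin n), h (fun i => Xs (σ (blk n m j i)) ω)
            = (m.factorial * (n - m).factorial : ℝ) *
              ∑ s ∈ (Finset.powersetCard m (Finset.univ : Finset (Fin n))).attach,
                h (fun j => Xs ((s.1.orderIsoOfFin
                    ((Finset.mem_powersetCard.mp s.2).2) j : Fin n)) ω) := by
        intro j
        exact sum_perm_eq hmn h hsymm (blk n m j) (blk_strictMono j) (fun t => Xs t ω)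
      have hfacts : ((n.choose m : ℝ)) * ((m.factorial : ℝ) * ((n - m).factorial : ℝ))
          = (n.factorial : ℝ) := by
        rw [← mul_assoc]
        exact_mod_cast congrArg (Nat.cast : ℕ → ℝ)
          (Nat.choose_mul_factorial_mul_factorial hmn)
      simp only [smul_eq_mul]
      set S := ∑ s ∈ (Finset.powersetCard m (Finset.univ : Finset (Fin n))).attach,
          h (fun j => Xs ((s.1.orderIsoOfFin
              ((Finset.mem_powersetCard.mp s.2).2) j : Fin n)) ω) with hSdef
      calc ∑ σ : Equiv.Perm (Fin n), ((n.factorial : ℝ))⁻¹ *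
              (∑ j : Fin k, l * h (fun i => Xs (σ (blk n m j i)) ω) / k)
          = ((n.factorial : ℝ))⁻¹ *
              ∑ j : Fin k, ∑ σ : Equiv.Perm (Fin n),
                l * h (fun i => Xs (σ (blk n m j i)) ω) / k := by
            rw [← Finset.mul_sum, Finset.sum_comm]
        _ = ((n.factorial : ℝ))⁻¹ * ∑ j : Fin k,
              (l * ((m.factorial * (n - m).factorial : ℝ) * S) / k) := by
            congr 1
            refine Finset.sum_congr rfl fun j _ => ?_
            rw [← Finset.sum_div, ← Finset.mul_sum, hA j]
        _ = ((n.factorial : ℝ))⁻¹ *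
              ((k:ℝ) * (l * ((m.factorial * (n - m).factorial : ℝ) * S) / k)) := by
            rw [Finset.sum_const, Finset.card_univ, Fintype.card_fin, nsmul_eq_mul]
        _ = l * Ustat m h Xs ω := by
            simp only [Ustat, ← hSdef]
            field_simp
            linear_combination (l * S) * hfacts
    rw [hcenter] at hJ
    exact hJ
  -- rewrite exponentials of sums as products over blocks
  have hexpprod : ∀ (σ : Equiv.Perm (Fin n)) (ω : Ω),
      Real.exp (∑ j : Fin k, l * h (fun i => Xs (σ (blk n m j i)) ω) / k)
        = ∏ j : Fin k, g (fun i => Xs (σ (blk n m j i)) ω) := by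
    intro σ ω
    rw [Real.exp_sum]
  have hfacpos : (0:ℝ) < (n.factorial : ℝ) := by exact_mod_cast n.factorial_pos
  show (∫ ω, Real.exp (l * Ustat m h Xs ω) ∂μ) ≤ R ^ k
  calc (∫ ω, Real.exp (l * Ustat m h Xs ω) ∂μ)
      ≤ ∫ ω, ∑ σ : Equiv.Perm (Fin n), ((n.factorial : ℝ))⁻¹ *
          ∏ j : Fin k, g (fun i => Xs (σ (blk n m j i)) ω) ∂μ := by
        refine integral_mono_of_nonneg (ae_of_all _ fun ω => (Real.exp_pos _).le)
          (integrable_finset_sum _ fun σ _ => ((hprod σ).1.const_mul _)) ?_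
        refine ae_of_all _ fun ω => ?_
        have := hjensen ω
        simp only [hexpprod] at this
        exact this
    _ = ∑ σ : Equiv.Perm (Fin n), ((n.factorial : ℝ))⁻¹ * (R ^ k) := by
        rw [integral_finset_sum _ fun σ _ => ((hprod σ).1.const_mul _)]
        refine Finset.sum_congr rfl fun σ _ => ?_
        rw [integral_const_mul, (hprod σ).2]
    _ = R ^ k := by
        rw [Finset.sum_const, Finset.card_univ, Fintype.card_perm, Fintype.card_fin,
          nsmul_eq_mul]
        field_simp
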